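/- For the generic monic polynomial f of degree n over A, the ring of invariants of the splitting algebra A[f_1,...,f_n]_f under the action of the symmetric group S_n (permuting the universal roots) is exactly A[f_1,...,f_n]. -/

import Mathlib

open MvPolynomial Polynomial

/-- The ideal `(s₁ - f₁, ..., sₙ - fₙ)` defining the splitting algebra, where
`fᵢ = (-1)^i · coeff f (n - i)` are the signed coefficients of `f`. -/
noncomputable def splittingIdeal (A : Type*) [CommRing A] (f : Polynomial A) (n : ℕ) :
    Ideal (MvPolynomial (Fin n) A) :=
  Ideal.span (Set.range fun i : Fin n =>
    esymm (Fin n) A ((i : ℕ) + 1) -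
      MvPolynomial.C ((-1 : A) ^ ((i : ℕ) + 1) * f.coeff (n - ((i : ℕ) + 1))))

/-- The splitting algebra `A_f = A[t₁,...,tₙ]/(s₁ - f₁, ..., sₙ - fₙ)`. -/
noncomputable def SplittingAlgebra (A : Type*) [CommRing A] (f : Polynomial A) (n : ℕ) :=
  MvPolynomial (Fin n) A ⧸ splittingIdeal A f n

noncomputable instance (A : Type*) [CommRing A] (f : Polynomial A) (n : ℕ) :
    CommRing (SplittingAlgebra A f n) := Ideal.Quotient.commRing _

noncomputable instance (R A : Type*) [CommSemiring R] [CommRing A] [Algebra R A]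
    (f : Polynomial A) (n : ℕ) : Algebra R (SplittingAlgebra A f n) :=
  Ideal.Quotient.algebra R

/-- The universal roots `τᵢ` of `f` in the splitting algebra. -/
noncomputable def univRoot (A : Type*) [CommRing A] (f : Polynomial A) (n : ℕ) (i : Fin n) :
    SplittingAlgebra A f n :=
  Ideal.Quotient.mk (splittingIdeal A f n) (MvPolynomial.X i)

/-- The action of a permutation `σ` on the splitting algebra, sending `τᵢ` to `τ_{σ⁻¹ i}`. -/
noncomputable def permHom (A : Type*) [CommRing A] (f : Polynomial A) (n : ℕ)
    (σ : Equiv.Perm (Fin n)) : SplittingAlgebra A f n →ₐ[A] SplittingAlgebra A f n :=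
  Ideal.Quotient.liftₐ (splittingIdeal A f n)
    ((Ideal.Quotient.mkₐ A (splittingIdeal A f n)).comp
      (rename (σ.symm : Fin n → Fin n)))
    (by
      intro a ha
      have h : splittingIdeal A f n ≤ RingHom.ker
          ((Ideal.Quotient.mkₐ A (splittingIdeal A f n)).comp
            (rename (σ.symm : Fin n → Fin n))) := by
        rw [splittingIdeal, Ideal.span_le]
        rintro _ ⟨i, rfl⟩
        have : (rename (σ.symm : Fin n → Fin n))
            (esymm (Fin n) A ((i : ℕ) + 1) -
              MvPolynomial.C ((-1 : A) ^ ((i : ℕ) + 1) * f.coeff (n - ((i : ℕ) + 1)))) =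
            esymm (Fin n) A ((i : ℕ) + 1) -
              MvPolynomial.C ((-1 : A) ^ ((i : ℕ) + 1) * f.coeff (n - ((i : ℕ) + 1))) := by
          rw [map_sub, rename_esymm, rename_C]
        simp only [SetLike.mem_coe, RingHom.mem_ker, AlgHom.coe_comp, Function.comp_apply, this]
        rw [Ideal.Quotient.mkₐ_eq_mk, Ideal.Quotient.eq_zero_iff_mem]
        exact Ideal.subset_span ⟨i, rfl⟩
      exact h ha)


section Auxiliary

variable (A : Type*) [CommRing A] (n : ℕ)

/-- The generic monic polynomial of degree `n`. -/
noncomputable def genPoly : Polynomial (MvPolynomial (Fin n) A) :=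
  Polynomial.X ^ n + ∑ i : Fin n,
    Polynomial.C ((-1 : MvPolynomial (Fin n) A) ^ ((i : ℕ) + 1) * MvPolynomial.X i) *
      Polynomial.X ^ (n - ((i : ℕ) + 1))

lemma coeff_genPoly (i : Fin n) :
    (genPoly A n).coeff (n - ((i : ℕ) + 1)) =
      (-1 : MvPolynomial (Fin n) A) ^ ((i : ℕ) + 1) * MvPolynomial.X i := by
  have hi : (i : ℕ) < n := i.2
  rw [genPoly, Polynomial.coeff_add, Polynomial.coeff_X_pow, if_neg (by omega),
    Polynomial.finset_sum_coeff, zero_add]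
  rw [Finset.sum_eq_single i]
  · rw [Polynomial.coeff_C_mul, Polynomial.coeff_X_pow, if_pos rfl, mul_one]
  · intro j _ hj
    have hj' : (j : ℕ) < n := j.2
    have hne : (j : ℕ) ≠ (i : ℕ) := fun h => hj (Fin.ext h)
    rw [Polynomial.coeff_C_mul, Polynomial.coeff_X_pow, if_neg (by omega), mul_zero]
  · intro h; exact absurd (Finset.mem_univ i) h

lemma splittingIdeal_genPoly :
    splittingIdeal (MvPolynomial (Fin n) A) (genPoly A n) n =
      Ideal.span (Set.range fun i : Fin n =>
        esymm (Fin n) (MvPolynomial (Fin n) A) ((i : ℕ) + 1) -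
          MvPolynomial.C (MvPolynomial.X i)) := by
  have h : (fun i : Fin n =>
      esymm (Fin n) (MvPolynomial (Fin n) A) ((i : ℕ) + 1) -
        MvPolynomial.C ((-1 : MvPolynomial (Fin n) A) ^ ((i : ℕ) + 1) *
          (genPoly A n).coeff (n - ((i : ℕ) + 1)))) =
      fun i : Fin n =>
        esymm (Fin n) (MvPolynomial (Fin n) A) ((i : ℕ) + 1) -
          MvPolynomial.C (MvPolynomial.X i) := by
    funext i
    rw [coeff_genPoly, ← mul_assoc, ← mul_pow, neg_mul_neg, one_mul, one_pow, one_mul]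
  rw [splittingIdeal, h]

lemma gen_mem_splittingIdeal (i : Fin n) :
    esymm (Fin n) (MvPolynomial (Fin n) A) ((i : ℕ) + 1) - MvPolynomial.C (MvPolynomial.X i) ∈
      splittingIdeal (MvPolynomial (Fin n) A) (genPoly A n) n := by
  rw [splittingIdeal_genPoly]
  exact Ideal.subset_span ⟨i, rfl⟩

/-- Evaluation of coefficients at the elementary symmetric polynomials. -/
noncomputable def phiMap : MvPolynomial (Fin n) A →+* MvPolynomial (Fin n) A :=
  (MvPolynomial.aeval (fun k : Fin n => esymm (Fin n) A ((k : ℕ) + 1)) :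
    MvPolynomial (Fin n) A →ₐ[A] MvPolynomial (Fin n) A).toRingHom

lemma rename_phiMap (e : Equiv.Perm (Fin n)) (b : MvPolynomial (Fin n) A) :
    rename (e : Fin n → Fin n) (phiMap A n b) = phiMap A n b := by
  show (rename (e : Fin n → Fin n))
      ((MvPolynomial.aeval fun k : Fin n => esymm (Fin n) A ((k : ℕ) + 1)) b) = _
  rw [← AlgHom.comp_apply, MvPolynomial.comp_aeval]
  simp only [rename_esymm]
  rfl

/-- The map from `A[f][t]` to `A[t]` sending `fₖ ↦ eₖ(t)` and `tᵢ ↦ tᵢ`. -/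
noncomputable def psiMap :
    MvPolynomial (Fin n) (MvPolynomial (Fin n) A) →+* MvPolynomial (Fin n) A :=
  eval₂Hom (phiMap A n) MvPolynomial.X

lemma psiMap_esymm (k : ℕ) :
    psiMap A n (esymm (Fin n) (MvPolynomial (Fin n) A) k) = esymm (Fin n) A k := by
  simp [psiMap, esymm, map_sum, map_prod]

lemma psiMap_ker :
    ∀ a ∈ splittingIdeal (MvPolynomial (Fin n) A) (genPoly A n) n, psiMap A n a = 0 := by
  intro a ha
  have h : splittingIdeal (MvPolynomial (Fin n) A) (genPoly A n) n ≤
      RingHom.ker (psiMap A n) := by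
    rw [splittingIdeal_genPoly, Ideal.span_le]
    rintro _ ⟨i, rfl⟩
    simp only [SetLike.mem_coe, RingHom.mem_ker, map_sub, psiMap_esymm]
    rw [psiMap, eval₂Hom_C, sub_eq_zero]
    show _ = phiMap A n (MvPolynomial.X i)
    rw [phiMap]
    simp
  exact h ha

/-- The induced map from the splitting algebra to `A[t]`. -/
noncomputable def psiBar :
    SplittingAlgebra (MvPolynomial (Fin n) A) (genPoly A n) n →+* MvPolynomial (Fin n) A :=
  Ideal.Quotient.lift _ (psiMap A n) (psiMap_ker A n)

/-- The map from `A[t]` to the splitting algebra. -/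
noncomputable def chiMap :
    MvPolynomial (Fin n) A →+* SplittingAlgebra (MvPolynomial (Fin n) A) (genPoly A n) n :=
  (Ideal.Quotient.mk (splittingIdeal (MvPolynomial (Fin n) A) (genPoly A n) n)).comp
    (MvPolynomial.map (MvPolynomial.C : A →+* MvPolynomial (Fin n) A))

lemma chi_phi : (chiMap A n).comp (phiMap A n) =
    (Ideal.Quotient.mk (splittingIdeal (MvPolynomial (Fin n) A) (genPoly A n) n)).comp
      (MvPolynomial.C :
        MvPolynomial (Fin n) A →+* MvPolynomial (Fin n) (MvPolynomial (Fin n) A)) := by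
  apply MvPolynomial.ringHom_ext
  · intro a
    show chiMap A n (phiMap A n (MvPolynomial.C a)) =
      Ideal.Quotient.mk (splittingIdeal (MvPolynomial (Fin n) A) (genPoly A n) n)
        (MvPolynomial.C (MvPolynomial.C a))
    rw [show phiMap A n (MvPolynomial.C a) = MvPolynomial.C a from by
      simp [phiMap, MvPolynomial.algebraMap_eq]]
    show Ideal.Quotient.mk (splittingIdeal (MvPolynomial (Fin n) A) (genPoly A n) n)
      (MvPolynomial.map (MvPolynomial.C : A →+* MvPolynomial (Fin n) A)
        (MvPolynomial.C a)) = _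
    rw [MvPolynomial.map_C]
  · intro k
    show chiMap A n (phiMap A n (MvPolynomial.X k)) =
      Ideal.Quotient.mk (splittingIdeal (MvPolynomial (Fin n) A) (genPoly A n) n)
        (MvPolynomial.C (MvPolynomial.X k))
    rw [show phiMap A n (MvPolynomial.X k) = esymm (Fin n) A ((k : ℕ) + 1) from by
      simp [phiMap]]
    show Ideal.Quotient.mk (splittingIdeal (MvPolynomial (Fin n) A) (genPoly A n) n)
      (MvPolynomial.map (MvPolynomial.C : A →+* MvPolynomial (Fin n) A)
        (esymm (Fin n) A ((k : ℕ) + 1))) = _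
    rw [map_esymm, Ideal.Quotient.eq]
    exact gen_mem_splittingIdeal A n k

lemma chi_psi : (chiMap A n).comp (psiMap A n) =
    Ideal.Quotient.mk (splittingIdeal (MvPolynomial (Fin n) A) (genPoly A n) n) := by
  apply MvPolynomial.ringHom_ext
  · intro b
    simp only [RingHom.comp_apply, psiMap, eval₂Hom_C]
    exact RingHom.congr_fun (chi_phi A n) b
  · intro i
    show chiMap A n (psiMap A n (MvPolynomial.X i)) =
      Ideal.Quotient.mk (splittingIdeal (MvPolynomial (Fin n) A) (genPoly A n) n)
        (MvPolynomial.X i)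
    rw [show psiMap A n (MvPolynomial.X i) = MvPolynomial.X i from eval₂Hom_X' _ _ i]
    show Ideal.Quotient.mk (splittingIdeal (MvPolynomial (Fin n) A) (genPoly A n) n)
      (MvPolynomial.map (MvPolynomial.C : A →+* MvPolynomial (Fin n) A)
        (MvPolynomial.X i)) = _
    rw [MvPolynomial.map_X]

lemma chi_psiBar (x : SplittingAlgebra (MvPolynomial (Fin n) A) (genPoly A n) n) :
    chiMap A n (psiBar A n x) = x := by
  obtain ⟨p, rfl⟩ := Ideal.Quotient.mk_surjective x
  show chiMap A n (psiMap A n p) = _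
  exact RingHom.congr_fun (chi_psi A n) p

lemma permHom_mk (σ : Equiv.Perm (Fin n))
    (p : MvPolynomial (Fin n) (MvPolynomial (Fin n) A)) :
    permHom (MvPolynomial (Fin n) A) (genPoly A n) n σ
        (Ideal.Quotient.mk (splittingIdeal (MvPolynomial (Fin n) A) (genPoly A n) n) p) =
      Ideal.Quotient.mk (splittingIdeal (MvPolynomial (Fin n) A) (genPoly A n) n)
        (rename (σ.symm : Fin n → Fin n) p) := by
  rfl

lemma psiBar_perm (σ : Equiv.Perm (Fin n))
    (x : SplittingAlgebra (MvPolynomial (Fin n) A) (genPoly A n) n) :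
    psiBar A n (permHom (MvPolynomial (Fin n) A) (genPoly A n) n σ x) =
      rename (σ.symm : Fin n → Fin n) (psiBar A n x) := by
  obtain ⟨p, rfl⟩ := Ideal.Quotient.mk_surjective x
  rw [permHom_mk]
  show psiMap A n _ = rename (σ.symm : Fin n → Fin n) (psiMap A n p)
  have h2 : (psiMap A n).comp
      ((rename (σ.symm : Fin n → Fin n) :
        MvPolynomial (Fin n) (MvPolynomial (Fin n) A) →ₐ[MvPolynomial (Fin n) A] _).toRingHom) =
      ((rename (σ.symm : Fin n → Fin n) :
        MvPolynomial (Fin n) A →ₐ[A] _).toRingHom).comp (psiMap A n) := by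
    apply MvPolynomial.ringHom_ext
    · intro b
      simp only [RingHom.comp_apply, AlgHom.toRingHom_eq_coe, RingHom.coe_coe, rename_C,
        psiMap, eval₂Hom_C]
      exact (rename_phiMap A n σ.symm b).symm
    · intro i
      simp [psiMap]
  exact RingHom.congr_fun h2 p

lemma algMap_genPoly (b : MvPolynomial (Fin n) A) :
    algebraMap (MvPolynomial (Fin n) A)
        (SplittingAlgebra (MvPolynomial (Fin n) A) (genPoly A n) n) b =
      Ideal.Quotient.mk (splittingIdeal (MvPolynomial (Fin n) A) (genPoly A n) n)
        (MvPolynomial.C b) := rfl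

end Auxiliary

/-- For the generic monic polynomial `f` of degree `n` over `A`, the ring of invariants of the
splitting algebra under the symmetric group `Sₙ` is exactly the coefficient ring
`A[f₁,...,fₙ]`. -/
theorem generic_splittingAlgebra_invariants (A : Type*) [CommRing A] (n : ℕ) :
    ∀ x : SplittingAlgebra (MvPolynomial (Fin n) A) (Polynomial.X ^ n + ∑ i : Fin n, Polynomial.C ((-1 : MvPolynomial (Fin n) A) ^ ((i : ℕ) + 1) * MvPolynomial.X i) * Polynomial.X ^ (n - ((i : ℕ) + 1))) n,
      (∀ σ : Equiv.Perm (Fin n), permHom (MvPolynomial (Fin n) A) (Polynomial.X ^ n + ∑ i : Fin n, Polynomial.C ((-1 : MvPolynomial (Fin n) A) ^ ((i : ℕ) + 1) * MvPolynomial.X i) * Polynomial.X ^ (n - ((i : ℕ) + 1))) n σ x = x) ↔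
        x ∈ (algebraMap (MvPolynomial (Fin n) A)
          (SplittingAlgebra (MvPolynomial (Fin n) A) (Polynomial.X ^ n + ∑ i : Fin n, Polynomial.C ((-1 : MvPolynomial (Fin n) A) ^ ((i : ℕ) + 1) * MvPolynomial.X i) * Polynomial.X ^ (n - ((i : ℕ) + 1))) n)).range := by
  show ∀ x : SplittingAlgebra (MvPolynomial (Fin n) A) (genPoly A n) n,
      (∀ σ : Equiv.Perm (Fin n),
        permHom (MvPolynomial (Fin n) A) (genPoly A n) n σ x = x) ↔
      x ∈ (algebraMap (MvPolynomial (Fin n) A)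
        (SplittingAlgebra (MvPolynomial (Fin n) A) (genPoly A n) n)).range
  intro x
  constructor
  · intro hinv
    have hsym : (psiBar A n x).IsSymmetric := by
      intro e
      have h1 := psiBar_perm A n e.symm x
      rw [hinv e.symm, Equiv.symm_symm] at h1
      exact h1.symm
    obtain ⟨q, hq⟩ := esymmAlgHom_surjective (σ := Fin n) (R := A) (n := n)
      (le_of_eq (Fintype.card_fin n)) ⟨psiBar A n x, hsym⟩
    have hval : phiMap A n q = psiBar A n x := by
      have := congrArg Subtype.val hq
      rw [esymmAlgHom_apply] at this
      exact this
    refine ⟨q, ?_⟩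
    erw [algMap_genPoly]
    have : chiMap A n (phiMap A n q) =
        Ideal.Quotient.mk (splittingIdeal (MvPolynomial (Fin n) A) (genPoly A n) n)
          (MvPolynomial.C q) := RingHom.congr_fun (chi_phi A n) q
    rw [← this, hval, chi_psiBar]
  · rintro ⟨q, rfl⟩ σ
    erw [algMap_genPoly, permHom_mk, rename_C]
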